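/- Let R be a ring and let A, B be unital subrings of R. If X is an invertible A-B-submodule of R, then X is finitely generated and projective as a left A-module. -/

import Mathlib

open Pointwise

/-- `A` is a unital subring of the (possibly non-unital) ring `R`, with identity element
`oneA` (not necessarily an identity of `R`). -/
structure IsUnitalSubring {R : Type*} [NonUnitalRing R] (A : AddSubgroup R) (oneA : R) : Prop where
  one_mem : oneA ∈ A
  mul_mem : ∀ ⦃a⦄, a ∈ A → ∀ ⦃b⦄, b ∈ A → a * b ∈ A
  one_mul : ∀ a ∈ A, oneA * a = a
  mul_one : ∀ a ∈ A, a * oneA = a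

/-- `X` is an invertible (unital) `A`-`B`-submodule of `R` with inverse `Xinv`:
`X Xinv = A` and `Xinv X = B`, where products denote the additive subgroup generated by
all products (i.e. finite sums of products). -/
structure IsInvertibleSubmodule {R : Type*} [NonUnitalRing R]
    (A B : AddSubgroup R) (oneA oneB : R) (X Xinv : AddSubgroup R) : Prop where
  unitalA : IsUnitalSubring A oneA
  unitalB : IsUnitalSubring B oneB
  smul_mem : ∀ ⦃a⦄, a ∈ A → ∀ ⦃x⦄, x ∈ X → a * x ∈ X
  mem_smul : ∀ ⦃x⦄, x ∈ X → ∀ ⦃b⦄, b ∈ B → x * b ∈ X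
  one_smul : ∀ x ∈ X, oneA * x = x
  smul_one : ∀ x ∈ X, x * oneB = x
  smul_mem' : ∀ ⦃b⦄, b ∈ B → ∀ ⦃y⦄, y ∈ Xinv → b * y ∈ Xinv
  mem_smul' : ∀ ⦃y⦄, y ∈ Xinv → ∀ ⦃a⦄, a ∈ A → y * a ∈ Xinv
  one_smul' : ∀ y ∈ Xinv, oneB * y = y
  smul_one' : ∀ y ∈ Xinv, y * oneA = y
  mul_inv : X * Xinv = A
  inv_mul : Xinv * X = B

/-- The ring structure on a unital subring of `R`. -/
def IsUnitalSubring.ring {R : Type*} [NonUnitalRing R] {A : AddSubgroup R} {oneA : R}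
    (h : IsUnitalSubring A oneA) : Ring A :=
  { (inferInstance : AddCommGroup A) with
    mul := fun a b => ⟨a.1 * b.1, h.mul_mem a.2 b.2⟩
    one := ⟨oneA, h.one_mem⟩
    mul_assoc := fun a b c => Subtype.ext (mul_assoc a.1 b.1 c.1)
    one_mul := fun a => Subtype.ext (h.one_mul a.1 a.2)
    mul_one := fun a => Subtype.ext (h.mul_one a.1 a.2)
    left_distrib := fun a b c => Subtype.ext (mul_add a.1 b.1 c.1)
    right_distrib := fun a b c => Subtype.ext (add_mul a.1 b.1 c.1)
    zero_mul := fun a => Subtype.ext (zero_mul a.1)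
    mul_zero := fun a => Subtype.ext (mul_zero a.1) }


/-- The left `A`-module structure on `X`. -/
def IsInvertibleSubmodule.leftModule {R : Type*} [NonUnitalRing R]
    {A B : AddSubgroup R} {oneA oneB : R} {X Xinv : AddSubgroup R}
    (h : IsInvertibleSubmodule A B oneA oneB X Xinv) :
    letI := h.unitalA.ring
    Module ↥A ↥X := by
  letI := h.unitalA.ring
  exact
  { smul := fun a x => ⟨a.1 * x.1, h.smul_mem a.2 x.2⟩
    one_smul := fun x => Subtype.ext (h.one_smul x.1 x.2)
    mul_smul := fun a a' x => Subtype.ext (mul_assoc a.1 a'.1 x.1)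
    smul_zero := fun a => Subtype.ext (mul_zero a.1)
    smul_add := fun a x y => Subtype.ext (mul_add a.1 x.1 y.1)
    add_smul := fun a a' x => Subtype.ext (add_mul a.1 a'.1 x.1)
    zero_smul := fun x => Subtype.ext (zero_mul x.1) }

theorem mem_mul_list {R : Type*} [NonUnitalNonAssocRing R] (M N : AddSubgroup R) {r : R}
    (hr : r ∈ M * N) : ∃ l : List (R × R),
    (∀ p ∈ l, p.1 ∈ M ∧ p.2 ∈ N) ∧ r = (l.map fun p => p.1 * p.2).sum := by
  have hr' : r ∈ M.toAddSubmonoid * N.toAddSubmonoid := hr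
  refine AddSubmonoid.mul_induction_on hr' ?_ ?_
  · intro m hm n hn
    exact ⟨[(m, n)], by simp_all, by simp⟩
  · rintro r₁ r₂ ⟨l₁, h₁, rfl⟩ ⟨l₂, h₂, rfl⟩
    exact ⟨l₁ ++ l₂, by intro p hp; rcases List.mem_append.1 hp with h|h; exacts [h₁ p h, h₂ p h],
      by simp⟩

/-- An invertible `A`-`B`-submodule `X` of `R` is finitely generated and
projective as a left `A`-module. -/
theorem invertibleSubmodule_finite_projective_left {R : Type*} [NonUnitalRing R]
    (A B : AddSubgroup R) (oneA oneB : R) (X Xinv : AddSubgroup R)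
    (h : IsInvertibleSubmodule A B oneA oneB X Xinv) :
    letI := h.unitalA.ring
    letI := h.leftModule
    Module.Finite ↥A ↥X ∧ Module.Projective ↥A ↥X := by
  letI := h.unitalA.ring
  letI := h.leftModule
  -- write oneB as a finite sum of products y_i * x_i
  obtain ⟨l, hl, hsum⟩ := mem_mul_list Xinv X (h.inv_mul ▸ h.unitalB.one_mem)
  set n := l.length with hn
  set y : Fin n → R := fun i => (l.get i).1 with hy
  set x : Fin n → R := fun i => (l.get i).2 with hx
  have hyX : ∀ i, y i ∈ Xinv := fun i => (hl _ (l.get_mem i)).1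
  have hxX : ∀ i, x i ∈ X := fun i => (hl _ (l.get_mem i)).2
  have hone : ∑ i, y i * x i = oneB := by
    rw [hsum, ← Fin.sum_univ_fun_getElem l (fun p => p.1 * p.2)]
    rfl
  -- generators
  set gen : Fin n → ↥X := fun i => ⟨x i, hxX i⟩ with hgen
  -- dual functionals
  have memA : ∀ (z : ↥X) (i : Fin n), z.1 * y i ∈ A := by
    intro z i
    rw [← h.mul_inv]
    exact AddSubmonoid.mul_mem_mul z.2 (hyX i)
  set f : ↥X →ₗ[↥A] (Fin n → ↥A) :=
    { toFun := fun z => fun i => ⟨z.1 * y i, memA z i⟩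
      map_add' := fun z w => by funext i; exact Subtype.ext (add_mul z.1 w.1 (y i))
      map_smul' := fun a z => by funext i; exact Subtype.ext (mul_assoc a.1 z.1 (y i)) } with hf
  set π : (Fin n → ↥A) →ₗ[↥A] ↥X :=
    { toFun := fun g => ∑ i, g i • gen i
      map_add' := fun g g' => by
        simp only [Pi.add_apply, add_smul]
        exact Finset.sum_add_distrib
      map_smul' := fun a g => by
        simp only [Pi.smul_apply, smul_eq_mul, RingHom.id_apply, Finset.smul_sum, mul_smul] } with hπ
  have hid : ∀ z : ↥X, π (f z) = z := by
    intro z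
    apply Subtype.ext
    have : ((∑ i, (f z) i • gen i : ↥X) : R) = ∑ i, ((f z) i • gen i : ↥X).1 := by
      exact map_sum X.subtype _ _
    simp only [hπ, LinearMap.coe_mk, AddHom.coe_mk]
    rw [this]
    have : ∀ i : Fin n, (((f z) i • gen i : ↥X) : R) = z.1 * (y i * x i) := by
      intro i
      show (z.1 * y i) * x i = z.1 * (y i * x i)
      exact mul_assoc _ _ _
    rw [Finset.sum_congr rfl fun i _ => this i, ← Finset.mul_sum, hone]
    exact h.smul_one z.1 z.2
  constructor
  · exact Module.Finite.of_surjective π fun z => ⟨f z, hid z⟩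
  · exact Module.Projective.of_split f π (LinearMap.ext hid)
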